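/- Let 𝔤 be a finite-dimensional complex Lie algebra, let N, Ñ be 𝔤-modules and E a finite-dimensional 𝔤-module. Assume N is a direct summand of Ñ as a 𝔤-module, and Ñ is a direct summand of N⊗E as a 𝔤-module. Set A := F(N,N). Then the algebra homomorphism F(Ñ,Ñ) → End_A(F(N,Ñ)) given by left composition is bijective, i.e. End_A(F(N,Ñ)) = F(Ñ,Ñ). -/

import Mathlib

open TensorProduct

/-- `f` belongs to the locally finite part `F(M,N)` of `Hom_ℂ(M,N)` under the adjoint action
`⁅x, f⁆ = x ∘ f - f ∘ x` of `L`: the `L`-submodule generated by `f` is finite-dimensional. -/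
def InF (L : Type) [LieRing L] [LieAlgebra ℂ L] {M N : Type}
    [AddCommGroup M] [Module ℂ M] [LieRingModule L M] [LieModule ℂ L M]
    [AddCommGroup N] [Module ℂ N] [LieRingModule L N] [LieModule ℂ L N]
    (f : M →ₗ[ℂ] N) : Prop :=
  ∃ V : LieSubmodule ℂ L (M →ₗ[ℂ] N), f ∈ V ∧ FiniteDimensional ℂ V.toSubmodule

section Aux

variable (L : Type) [LieRing L] [LieAlgebra ℂ L]

variable {M N P : Type}
    [AddCommGroup M] [Module ℂ M] [LieRingModule L M] [LieModule ℂ L M]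
    [AddCommGroup N] [Module ℂ N] [LieRingModule L N] [LieModule ℂ L N]
    [AddCommGroup P] [Module ℂ P] [LieRingModule L P] [LieModule ℂ L P]

lemma InF_of_stable (V : Submodule ℂ (M →ₗ[ℂ] N))
    (hst : ∀ (x : L) (f : M →ₗ[ℂ] N), f ∈ V → ⁅x, f⁆ ∈ V)
    (hfin : FiniteDimensional ℂ V) {f : M →ₗ[ℂ] N} (hf : f ∈ V) : InF L f :=
  ⟨⟨V, fun hx => hst _ _ hx⟩, hf, hfin⟩

lemma lie_comp (x : L) (g : N →ₗ[ℂ] P) (f : M →ₗ[ℂ] N) :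
    ⁅x, g ∘ₗ f⁆ = ⁅x, g⁆ ∘ₗ f + g ∘ₗ ⁅x, f⁆ := by
  ext m; simp [LieHom.lie_apply]

lemma InF.comp {g : N →ₗ[ℂ] P} {f : M →ₗ[ℂ] N} (hg : InF L g) (hf : InF L f) :
    InF L (g ∘ₗ f) := by
  obtain ⟨W, hgW, hW⟩ := hg
  obtain ⟨V, hfV, hV⟩ := hf
  set c := LinearMap.llcomp ℂ M N P (σ₁₂ := RingHom.id ℂ) (σ₂₃ := RingHom.id ℂ) (σ₁₃ := RingHom.id ℂ) with hc
  refine InF_of_stable L (Submodule.map₂ c W.toSubmodule V.toSubmodule) ?_ ?_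
    (Submodule.apply_mem_map₂ c hgW hfV)
  · intro x h hh
    have key : Submodule.map₂ c W.toSubmodule V.toSubmodule ≤
        Submodule.comap ((LieModule.toEnd ℂ L (M →ₗ[ℂ] P)) x)
          (Submodule.map₂ c W.toSubmodule V.toSubmodule) := by
      rw [Submodule.map₂_le]
      intro w hw v hv
      simp only [Submodule.mem_comap, LieModule.toEnd_apply_apply]
      have : ⁅x, (c w) v⁆ = c ⁅x, w⁆ v + c w ⁅x, v⁆ := by
        exact lie_comp L x w v
      rw [this]
      exact add_mem (Submodule.apply_mem_map₂ c (W.lie_mem hw) hv)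
        (Submodule.apply_mem_map₂ c hw (V.lie_mem hv))
    simpa using key hh
  · exact (Submodule.fg_iff_finiteDimensional _).mp
      (Submodule.FG.map₂ c ((Submodule.fg_iff_finiteDimensional _).mpr hW)
        ((Submodule.fg_iff_finiteDimensional _).mpr hV))

lemma InF_of_range {E' : Type} [AddCommGroup E'] [Module ℂ E'] [FiniteDimensional ℂ E']
    (T : E' →ₗ[ℂ] (M →ₗ[ℂ] N))
    (h : ∀ (x : L) (e : E'), ∃ e', ⁅x, T e⁆ = T e') (e : E') : InF L (T e) := by
  refine InF_of_stable L (LinearMap.range T) ?_ ?_ (LinearMap.mem_range_self T e)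
  · rintro x f ⟨e₀, rfl⟩
    obtain ⟨e', he'⟩ := h x e₀
    exact ⟨e', he'.symm⟩
  · infer_instance

lemma lie_lieHom_eq_zero (x : L) (g : M →ₗ⁅ℂ,L⁆ N) : ⁅x, (g : M →ₗ[ℂ] N)⁆ = 0 := by
  ext m; simp [LieHom.lie_apply]

end Aux

section Pihat

variable (N E : Type)
    [AddCommGroup N] [Module ℂ N]
    [AddCommGroup E] [Module ℂ E]

/-- Contraction `N ⊗ E → N` against a functional on `E`, as a linear map in the functional. -/
noncomputable def pihat : (E →ₗ[ℂ] ℂ) →ₗ[ℂ] ((N ⊗[ℂ] E) →ₗ[ℂ] N) where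
  toFun φ := (TensorProduct.rid ℂ N).toLinearMap ∘ₗ LinearMap.lTensor N φ
  map_add' φ φ' := by ext n e; simp
  map_smul' c φ := by ext n e; simp

@[simp] lemma pihat_tmul (φ : E →ₗ[ℂ] ℂ) (n : N) (e : E) :
    pihat N E φ (n ⊗ₜ e) = φ e • n := by simp [pihat]

lemma pihat_expand [FiniteDimensional ℂ E]
    (bE : Module.Basis (Fin (Module.finrank ℂ E)) ℂ E) (m : N ⊗[ℂ] E) :
    ∑ k, (pihat N E (bE.coord k) m) ⊗ₜ[ℂ] (bE k) = m := by
  induction m using TensorProduct.induction_on with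
  | zero => simp
  | tmul n e =>
    simp only [pihat_tmul]
    calc ∑ k, (bE.coord k e • n) ⊗ₜ[ℂ] bE k
        = ∑ k, n ⊗ₜ[ℂ] (bE.coord k e • bE k) := by
          simp [TensorProduct.smul_tmul, TensorProduct.tmul_smul]
      _ = n ⊗ₜ[ℂ] (∑ k, bE.coord k e • bE k) := by rw [TensorProduct.tmul_sum]
      _ = n ⊗ₜ[ℂ] e := by simp [Module.Basis.coord_apply, bE.sum_repr e]
  | add m₁ m₂ h₁ h₂ =>
    simp only [map_add, TensorProduct.add_tmul, Finset.sum_add_distrib, h₁, h₂]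

variable (L : Type) [LieRing L] [LieAlgebra ℂ L]
    [LieRingModule L N] [LieModule ℂ L N]
    [LieRingModule L E] [LieModule ℂ L E]

lemma lie_pihat (x : L) (φ : E →ₗ[ℂ] ℂ) :
    ⁅x, pihat N E φ⁆ = pihat N E (-(φ ∘ₗ (LieModule.toEnd ℂ L E x))) := by
  ext n e
  show ⁅x, pihat N E φ⁆ (n ⊗ₜ e) = _
  rw [LieHom.lie_apply, TensorProduct.LieModule.lie_tmul_right]
  simp only [map_add, pihat_tmul, lie_smul, LinearMap.neg_apply, LinearMap.coe_comp,
    Function.comp_apply, LieModule.toEnd_apply_apply, neg_smul,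
    AlgebraTensorModule.curry_apply, TensorProduct.curry_apply,
    LinearMap.coe_restrictScalars, neg_one_smul]
  abel

end Pihat

variable (L : Type) [LieRing L] [LieAlgebra ℂ L]

/-- The locally finite part `F(M,N)` of `Hom_ℂ(M,N)`, as a `ℂ`-subspace. -/
def Fmod (M N : Type)
    [AddCommGroup M] [Module ℂ M] [LieRingModule L M] [LieModule ℂ L M]
    [AddCommGroup N] [Module ℂ N] [LieRingModule L N] [LieModule ℂ L N] :
    Submodule ℂ (M →ₗ[ℂ] N) where
  carrier := {f | InF L f}
  zero_mem' := ⟨⊥, LieSubmodule.zero_mem ⊥, by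
    rw [LieSubmodule.bot_toSubmodule]; infer_instance⟩
  add_mem' := by
    rintro f g ⟨V, hfV, hV⟩ ⟨W, hgW, hW⟩
    refine ⟨V ⊔ W, ?_, ?_⟩
    · exact add_mem ((LieSubmodule.mem_sup _ _ _).2 ⟨f, hfV, 0, W.zero_mem, by simp⟩)
        ((LieSubmodule.mem_sup _ _ _).2 ⟨0, V.zero_mem, g, hgW, by simp⟩)
    · rw [LieSubmodule.sup_toSubmodule]
      exact Submodule.finiteDimensional_sup _ _
  smul_mem' := by
    rintro c f ⟨V, hfV, hV⟩
    exact ⟨V, V.smul_mem c hfV, hV⟩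

lemma mem_Fmod_iff {M N : Type}
    [AddCommGroup M] [Module ℂ M] [LieRingModule L M] [LieModule ℂ L M]
    [AddCommGroup N] [Module ℂ N] [LieRingModule L N] [LieModule ℂ L N]
    {f : M →ₗ[ℂ] N} : f ∈ Fmod L M N ↔ InF L f := Iff.rfl

set_option synthInstance.maxHeartbeats 1000000 in
set_option maxHeartbeats 2000000 in
/-- Suppose `N` is a direct summand of `Ñ` and `Ñ` is a direct summand of
`N ⊗ E` as `L`-modules (`E` finite-dimensional). Set `A := F(N,N)` and view `F(N,Ñ)` as a
right `A`-module via precomposition (encoded as a left `Aᵐᵒᵖ`-module structure pinned down by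
`hsmul`). Then the algebra homomorphism `F(Ñ,Ñ) → End_A(F(N,Ñ))` given by left composition
is bijective. -/
theorem statement6 [FiniteDimensional ℂ L] (N Ntilde E : Type)
    [AddCommGroup N] [Module ℂ N] [LieRingModule L N] [LieModule ℂ L N]
    [AddCommGroup Ntilde] [Module ℂ Ntilde] [LieRingModule L Ntilde] [LieModule ℂ L Ntilde]
    [AddCommGroup E] [Module ℂ E] [LieRingModule L E] [LieModule ℂ L E]
    [FiniteDimensional ℂ E]
    (i : N →ₗ⁅ℂ,L⁆ Ntilde) (p : Ntilde →ₗ⁅ℂ,L⁆ N) (hpi : ∀ n : N, p (i n) = n)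
    (j : Ntilde →ₗ⁅ℂ,L⁆ (N ⊗[ℂ] E)) (q : (N ⊗[ℂ] E) →ₗ⁅ℂ,L⁆ Ntilde)
    (hqj : ∀ m : Ntilde, q (j m) = m)
    (A : Subalgebra ℂ (Module.End ℂ N)) (hA : ∀ f : Module.End ℂ N, f ∈ A ↔ InF L f)
    [Module (↥A)ᵐᵒᵖ ↥(Fmod L N Ntilde)]
    (hsmul : ∀ (a : ↥A) (ψ : ↥(Fmod L N Ntilde)),
      ((MulOpposite.op a • ψ : ↥(Fmod L N Ntilde)) : N →ₗ[ℂ] Ntilde) =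
        (ψ : N →ₗ[ℂ] Ntilde) ∘ₗ (a : Module.End ℂ N)) :
    (∀ b : Ntilde →ₗ[ℂ] Ntilde, InF L b →
      ∀ ψ : ↥(Fmod L N Ntilde), InF L (b ∘ₗ (ψ : N →ₗ[ℂ] Ntilde))) ∧
    (∀ b b' : Ntilde →ₗ[ℂ] Ntilde, InF L b → InF L b' →
      (∀ ψ : ↥(Fmod L N Ntilde),
        b ∘ₗ (ψ : N →ₗ[ℂ] Ntilde) = b' ∘ₗ (ψ : N →ₗ[ℂ] Ntilde)) → b = b') ∧
    (∀ Φ : ↥(Fmod L N Ntilde) →ₗ[(↥A)ᵐᵒᵖ] ↥(Fmod L N Ntilde),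
      ∃ b : Ntilde →ₗ[ℂ] Ntilde, InF L b ∧
        ∀ ψ : ↥(Fmod L N Ntilde),
          ((Φ ψ : ↥(Fmod L N Ntilde)) : N →ₗ[ℂ] Ntilde) =
            b ∘ₗ (ψ : N →ₗ[ℂ] Ntilde)) := by
  classical
  -- basis of E
  set bE : Module.Basis (Fin (Module.finrank ℂ E)) ℂ E := Module.finBasis ℂ E with hbE
  -- the family ψ_e : N → Ñ, n ↦ q (n ⊗ e)
  let τ : E →ₗ[ℂ] (N →ₗ[ℂ] N ⊗[ℂ] E) := (TensorProduct.mk ℂ N E).flip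
  have hτapp : ∀ (e : E) (n : N), τ e n = n ⊗ₜ[ℂ] e := fun e n => rfl
  have hτ : ∀ (x : L) (e : E), ⁅x, τ e⁆ = τ ⁅x, e⁆ := by
    intro x e; ext n
    rw [LieHom.lie_apply, hτapp, hτapp, hτapp, TensorProduct.LieModule.lie_tmul_right]
    abel
  let ψf : E →ₗ[ℂ] (N →ₗ[ℂ] Ntilde) :=
    (LinearMap.llcomp ℂ N (N ⊗[ℂ] E) Ntilde (σ₁₂ := RingHom.id ℂ) (σ₂₃ := RingHom.id ℂ) (σ₁₃ := RingHom.id ℂ) (q : (N ⊗[ℂ] E) →ₗ[ℂ] Ntilde)) ∘ₗ τ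
  have hψapp : ∀ (e : E) (n : N), ψf e n = q (n ⊗ₜ[ℂ] e) := fun e n => rfl
  have hψcomp : ∀ e : E, ψf e = (q : (N ⊗[ℂ] E) →ₗ[ℂ] Ntilde) ∘ₗ τ e := fun e => rfl
  have hψ : ∀ (x : L) (e : E), ⁅x, ψf e⁆ = ψf ⁅x, e⁆ := by
    intro x e
    rw [hψcomp, hψcomp, lie_comp, lie_lieHom_eq_zero, hτ]
    simp
  have hψInF : ∀ e : E, InF L (ψf e) := fun e =>
    InF_of_range L ψf (fun x e₀ => ⟨⁅x, e₀⁆, hψ x e₀⟩) e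
  -- the family χ_φ : Ñ → N, m ↦ (id ⊗ φ) (j m)
  let χf : (E →ₗ[ℂ] ℂ) →ₗ[ℂ] (Ntilde →ₗ[ℂ] N) :=
    (LinearMap.lcomp ℂ N (j : Ntilde →ₗ[ℂ] N ⊗[ℂ] E)) ∘ₗ pihat N E
  have hχapp : ∀ (φ : E →ₗ[ℂ] ℂ) (m : Ntilde), χf φ m = pihat N E φ (j m) := fun φ m => rfl
  have hχcomp : ∀ φ : E →ₗ[ℂ] ℂ,
      χf φ = pihat N E φ ∘ₗ (j : Ntilde →ₗ[ℂ] N ⊗[ℂ] E) := fun φ => rfl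
  have hχ : ∀ (x : L) (φ : E →ₗ[ℂ] ℂ),
      ⁅x, χf φ⁆ = χf (-(φ ∘ₗ (LieModule.toEnd ℂ L E x))) := by
    intro x φ
    rw [hχcomp, hχcomp, lie_comp, lie_lieHom_eq_zero, lie_pihat N E L]
    simp
  have hχInF : ∀ φ : E →ₗ[ℂ] ℂ, InF L (χf φ) := fun φ =>
    InF_of_range L χf (fun x φ₀ => ⟨-(φ₀ ∘ₗ (LieModule.toEnd ℂ L E x)), hχ x φ₀⟩) φ
  -- the key expansion identity
  have hkey : ∀ m : Ntilde, ∑ k, ψf (bE k) (χf (bE.coord k) m) = m := by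
    intro m
    have h1 : ∑ k, ψf (bE k) (χf (bE.coord k) m)
        = ∑ k, (q : (N ⊗[ℂ] E) →ₗ[ℂ] Ntilde)
            ((pihat N E (bE.coord k) (j m)) ⊗ₜ[ℂ] (bE k)) := rfl
    rw [h1, ← map_sum (q : (N ⊗[ℂ] E) →ₗ[ℂ] Ntilde), pihat_expand N E bE (j m)]
    exact hqj m
  refine ⟨?_, ?_, ?_⟩
  · -- well-definedness
    exact fun b hb ψ => InF.comp L hb ψ.2
  · -- injectivity
    intro b b' _ _ h
    ext m
    have hb : ∀ k, ∀ n : N, b (ψf (bE k) n) = b' (ψf (bE k) n) := by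
      intro k n
      have := h ⟨ψf (bE k), hψInF (bE k)⟩
      have h2 := LinearMap.congr_fun this n
      simpa using h2
    calc b m = b (∑ k, ψf (bE k) (χf (bE.coord k) m)) := by rw [hkey]
      _ = ∑ k, b (ψf (bE k) (χf (bE.coord k) m)) := by rw [map_sum]
      _ = ∑ k, b' (ψf (bE k) (χf (bE.coord k) m)) := by
          exact Finset.sum_congr rfl fun k _ => hb k _
      _ = b' (∑ k, ψf (bE k) (χf (bE.coord k) m)) := by rw [map_sum]
      _ = b' m := by rw [hkey]
  · -- surjectivity
    intro Φ
    set ψel : Fin (Module.finrank ℂ E) → ↥(Fmod L N Ntilde) :=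
      fun k => ⟨ψf (bE k), hψInF (bE k)⟩ with hψel
    set b : Ntilde →ₗ[ℂ] Ntilde :=
      ∑ k, ((Φ (ψel k) : N →ₗ[ℂ] Ntilde) ∘ₗ χf (bE.coord k)) with hb
    have hbInF : InF L b := by
      have : b ∈ Fmod L Ntilde Ntilde := by
        refine Submodule.sum_mem _ fun k _ => ?_
        exact (mem_Fmod_iff L).mpr (InF.comp L (Φ (ψel k)).2 (hχInF (bE.coord k)))
      exact (mem_Fmod_iff L).mp this
    refine ⟨b, hbInF, ?_⟩
    intro ψ
    -- the coefficients a_k ∈ A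
    set a : Fin (Module.finrank ℂ E) → ↥A := fun k =>
      ⟨χf (bE.coord k) ∘ₗ (ψ : N →ₗ[ℂ] Ntilde),
        (hA _).mpr (InF.comp L (hχInF (bE.coord k)) ψ.2)⟩ with ha
    -- decomposition of ψ
    have hdecomp : ψ = ∑ k, MulOpposite.op (a k) • ψel k := by
      apply Subtype.ext
      have hcoe : ((∑ k, MulOpposite.op (a k) • ψel k : ↥(Fmod L N Ntilde)) : N →ₗ[ℂ] Ntilde)
          = ∑ k, ((MulOpposite.op (a k) • ψel k : ↥(Fmod L N Ntilde)) : N →ₗ[ℂ] Ntilde) := by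
        exact map_sum (Fmod L N Ntilde).subtype _ _
      rw [hcoe]
      ext n
      rw [LinearMap.sum_apply]
      have hterm : ∀ k, ((MulOpposite.op (a k) • ψel k : ↥(Fmod L N Ntilde)) : N →ₗ[ℂ] Ntilde) n
          = ψf (bE k) (χf (bE.coord k) ((ψ : N →ₗ[ℂ] Ntilde) n)) := by
        intro k
        rw [hsmul (a k) (ψel k)]
        rfl
      calc ((ψ : N →ₗ[ℂ] Ntilde)) n
          = ∑ k, ψf (bE k) (χf (bE.coord k) ((ψ : N →ₗ[ℂ] Ntilde) n)) := (hkey _).symm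
        _ = ∑ k, ((MulOpposite.op (a k) • ψel k : ↥(Fmod L N Ntilde)) : N →ₗ[ℂ] Ntilde) n := by
            exact Finset.sum_congr rfl fun k _ => (hterm k).symm
    -- conclude
    have hΦψ : Φ ψ = ∑ k, MulOpposite.op (a k) • Φ (ψel k) := by
      conv_lhs => rw [hdecomp]
      rw [map_sum]
      exact Finset.sum_congr rfl fun k _ => Φ.map_smul _ _
    have hcoe2 : ((Φ ψ : ↥(Fmod L N Ntilde)) : N →ₗ[ℂ] Ntilde)
        = ∑ k, ((Φ (ψel k) : N →ₗ[ℂ] Ntilde) ∘ₗ (a k : Module.End ℂ N)) := by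
      rw [hΦψ]
      rw [show ((∑ k, MulOpposite.op (a k) • Φ (ψel k) : ↥(Fmod L N Ntilde)) : N →ₗ[ℂ] Ntilde)
          = ∑ k, ((MulOpposite.op (a k) • Φ (ψel k) : ↥(Fmod L N Ntilde)) : N →ₗ[ℂ] Ntilde)
        from map_sum (Fmod L N Ntilde).subtype _ _]
      exact Finset.sum_congr rfl fun k _ => hsmul (a k) (Φ (ψel k))
    rw [hcoe2, hb]
    ext n
    rw [LinearMap.sum_apply, LinearMap.comp_apply, LinearMap.sum_apply]
    refine Finset.sum_congr rfl fun k _ => rfl
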